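/- For every b ∈ (1, β) there exists a constant C < ∞ such that for all x ∈ ℝ, ∫₀³ p_r(x)^b dr ≤ C/(1 + x²). -/

import Mathlib

set_option maxHeartbeats 1000000

noncomputable def pdens (ψ : ℝ → ℝ) (s x : ℝ) : ℝ :=
  (1 / Real.pi) * ∫ p in Set.Ioi (0:ℝ), Real.cos (p * x) * Real.exp (-s * ψ p)

open Real MeasureTheory Set Filter

lemma aux_exp_le {k u : ℝ} (hk : 0 < k) (hu : 0 < u) :
    Real.exp (-u) ≤ (k / Real.exp 1) ^ k * u ^ (-k) := by
  have h1 : Real.log (u / k) ≤ u / k - 1 := Real.log_le_sub_one_of_pos (by positivity)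
  have hlog : Real.log u - Real.log k ≤ u / k - 1 := by
    rwa [Real.log_div hu.ne' hk.ne'] at h1
  have key : -u ≤ k * Real.log (k / Real.exp 1) + (-k) * Real.log u := by
    rw [Real.log_div hk.ne' (Real.exp_pos 1).ne', Real.log_exp]
    have h2 := mul_le_mul_of_nonneg_left hlog hk.le
    have h3 : k * (u / k) = u := by field_simp
    nlinarith [h2, h3]
  calc Real.exp (-u) ≤ Real.exp (k * Real.log (k / Real.exp 1) + (-k) * Real.log u) :=
        Real.exp_le_exp.2 key
    _ = (k / Real.exp 1) ^ k * u ^ (-k) := by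
        rw [Real.exp_add, Real.rpow_def_of_pos (by positivity : (0:ℝ) < k / Real.exp 1),
          Real.rpow_def_of_pos hu, mul_comm (Real.log _) k, mul_comm (Real.log u) (-k)]

lemma tail_lb (β : ℝ) (ψ : ℝ → ℝ)
    (hpos : ∀ p : ℝ, p ≠ 0 → 0 < ψ p)
    (hRV : ∀ l : ℝ, 0 < l →
      Filter.Tendsto (fun x => ψ (l * x) / ψ x) Filter.atTop (nhds (l ^ β)))
    (hdiff1 : ∀ p : ℝ, 0 < p → DifferentiableAt ℝ ψ p)
    (D₁ : ℝ) (hD1 : ∀ l : ℝ, 1 ≤ l → l * |deriv ψ l| ≤ D₁ * ψ l)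
    (b' : ℝ) (hb'0 : 0 < b') (hb' : b' < β) :
    ∃ M c : ℝ, 1 ≤ M ∧ 0 < c ∧ ∀ p, M ≤ p → c * p ^ b' ≤ ψ p := by
  have hψ1 : 0 < ψ 1 := hpos 1 one_ne_zero
  have hD₁0 : 0 ≤ D₁ := by
    have := hD1 1 le_rfl
    nlinarith [abs_nonneg (deriv ψ 1)]
  -- monotonicity of F p = ψ p * p ^ D₁ on [1, ∞)
  have hFmono : MonotoneOn (fun p => ψ p * p ^ D₁) (Set.Ici (1:ℝ)) := by
    have hder : ∀ p ∈ interior (Set.Ici (1:ℝ)),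
        HasDerivAt (fun p => ψ p * p ^ D₁)
          (deriv ψ p * p ^ D₁ + ψ p * (D₁ * p ^ (D₁ - 1))) p := by
      intro p hp
      rw [interior_Ici] at hp
      have hp0 : (0:ℝ) < p := lt_trans one_pos hp
      exact ((hdiff1 p hp0).hasDerivAt).mul
        (Real.hasDerivAt_rpow_const (Or.inl hp0.ne'))
    apply monotoneOn_of_deriv_nonneg (convex_Ici 1)
    · apply ContinuousOn.mul
      · intro p hp
        exact ((hdiff1 p (lt_of_lt_of_le one_pos hp)).continuousAt).continuousWithinAt
      · intro p hp
        exact (Real.continuousAt_rpow_const p D₁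
          (Or.inl (ne_of_gt (lt_of_lt_of_le one_pos hp)))).continuousWithinAt
    · intro p hp
      exact ((hder p hp).differentiableAt).differentiableWithinAt
    · intro p hp
      rw [(hder p hp).deriv]
      rw [interior_Ici] at hp
      have hp0 : (0:ℝ) < p := lt_trans one_pos hp
      have habs : |deriv ψ p| ≤ D₁ * ψ p / p := by
        rw [le_div_iff₀ hp0]
        have := hD1 p hp.le
        linarith [this]
      have h1 : deriv ψ p ≥ -(D₁ * ψ p / p) := neg_le_of_abs_le habs
      have h2 : p ^ (D₁ - 1) = p ^ D₁ / p := by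
        rw [Real.rpow_sub hp0, Real.rpow_one]
      have hppos : (0:ℝ) < p ^ D₁ := Real.rpow_pos_of_pos hp0 _
      have hψp : 0 < ψ p := hpos p hp0.ne'
      rw [h2]
      have : -(D₁ * ψ p / p) * p ^ D₁ + ψ p * (D₁ * (p ^ D₁ / p)) = 0 := by ring
      nlinarith [mul_le_mul_of_nonneg_right h1 hppos.le]
  -- eventually ψ (2 x) ≥ 2 ^ b' * ψ x
  have h2b : (2:ℝ) ^ b' < 2 ^ β := Real.rpow_lt_rpow_left_iff one_lt_two |>.2 hb'
  have hev : ∀ᶠ x in Filter.atTop, (2:ℝ) ^ b' < ψ (2 * x) / ψ x :=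
    (hRV 2 two_pos).eventually (eventually_gt_nhds h2b)
  obtain ⟨M₀, hM₀⟩ := Filter.eventually_atTop.1 hev
  set M : ℝ := max M₀ 1 with hM
  have hM1 : (1:ℝ) ≤ M := le_max_right _ _
  have hM0 : (0:ℝ) < M := lt_of_lt_of_le one_pos hM1
  have hψM : 0 < ψ M := hpos M hM0.ne'
  have hstep : ∀ q : ℝ, M ≤ q → (2:ℝ) ^ b' * ψ q ≤ ψ (2 * q) := by
    intro q hq
    have hq0 : 0 < q := lt_of_lt_of_le hM0 hq
    have hψq : 0 < ψ q := hpos q hq0.ne'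
    have := hM₀ q (le_trans (le_max_left _ _) hq)
    rw [lt_div_iff₀ hψq] at this
    linarith
  have key : ∀ n : ℕ, (2:ℝ) ^ (b' * n) * ψ M ≤ ψ (2 ^ n * M) := by
    intro n
    induction n with
    | zero => simp
    | succ n ih =>
      have h2n : (1:ℝ) ≤ 2 ^ n := one_le_pow₀ (by norm_num)
      have hq : M ≤ 2 ^ n * M := le_mul_of_one_le_left hM0.le h2n
      have := hstep (2 ^ n * M) hq
      have harr : (2:ℝ) ^ (n + 1) * M = 2 * (2 ^ n * M) := by ring
      rw [harr]
      calc (2:ℝ) ^ (b' * (n + 1 : ℕ)) * ψ M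
          = (2:ℝ) ^ b' * ((2:ℝ) ^ (b' * n) * ψ M) := by
            rw [← mul_assoc, ← Real.rpow_add two_pos]
            push_cast
            ring_nf
        _ ≤ (2:ℝ) ^ b' * ψ (2 ^ n * M) := by
            exact mul_le_mul_of_nonneg_left ih (Real.rpow_nonneg (by norm_num) _)
        _ ≤ ψ (2 * (2 ^ n * M)) := this
  refine ⟨M, ψ M * 2 ^ (-(b' + D₁)) * M ^ (-b'), hM1, by positivity, ?_⟩
  intro p hp
  have hp0 : 0 < p := lt_of_lt_of_le hM0 hp
  set n : ℕ := ⌊Real.logb 2 (p / M)⌋₊ with hn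
  have hratio1 : (1:ℝ) ≤ p / M := (one_le_div hM0).2 hp
  have hlogb0 : 0 ≤ Real.logb 2 (p / M) := Real.logb_nonneg one_lt_two hratio1
  have hn1 : (2:ℝ) ^ n ≤ p / M := by
    have h1 : (n : ℝ) ≤ Real.logb 2 (p / M) := Nat.floor_le hlogb0
    calc (2:ℝ) ^ n = (2:ℝ) ^ (n : ℝ) := by rw [Real.rpow_natCast]
      _ ≤ (2:ℝ) ^ Real.logb 2 (p / M) := Real.rpow_le_rpow_left_iff one_lt_two |>.2 h1
      _ = p / M := Real.rpow_logb two_pos (by norm_num) (by positivity)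
  have hn2 : p / M < (2:ℝ) ^ (n + 1) := by
    have h1 : Real.logb 2 (p / M) < (n : ℝ) + 1 := Nat.lt_floor_add_one _
    calc p / M = (2:ℝ) ^ Real.logb 2 (p / M) :=
          (Real.rpow_logb two_pos (by norm_num) (by positivity)).symm
      _ < (2:ℝ) ^ ((n:ℝ) + 1) := Real.rpow_lt_rpow_left_iff one_lt_two |>.2 h1
      _ = (2:ℝ) ^ (n + 1) := by rw [← Real.rpow_natCast 2 (n+1)]; push_cast; ring_nf
  have hq : M ≤ 2 ^ n * M := le_mul_of_one_le_left hM0.le (one_le_pow₀ (by norm_num))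
  have hqp : 2 ^ n * M ≤ p := (le_div_iff₀ hM0).1 hn1
  -- from monotonicity
  have hmono := hFmono (Set.mem_Ici.2 (le_trans hM1 hq)) (Set.mem_Ici.2 (le_trans hM1 (le_trans hq hqp))) hqp
  -- ψ p ≥ ψ (2^n M) * (2^n M) ^ D₁ / p ^ D₁
  have hpD : (0:ℝ) < p ^ D₁ := Real.rpow_pos_of_pos hp0 _
  have hψ2n : 0 < ψ (2 ^ n * M) := hpos _ (by positivity)
  have hlb1 : ψ (2 ^ n * M) * ((2:ℝ) ^ n * M) ^ D₁ / p ^ D₁ ≤ ψ p := by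
    rw [div_le_iff₀ hpD]
    exact hmono
  -- (2^n M / p) ^ D₁ ≥ 2 ^ (-D₁)
  have hhalf : (1:ℝ) / 2 ≤ (2:ℝ) ^ n * M / p := by
    rw [div_le_div_iff₀ two_pos hp0]
    have hplt : p < 2 ^ (n+1) * M := (div_lt_iff₀ hM0).1 hn2
    have : (2:ℝ) ^ (n+1) * M = 2 ^ n * M * 2 := by ring
    nlinarith
  have hbase : ((2:ℝ) ^ n * M) ^ D₁ / p ^ D₁ = ((2:ℝ) ^ n * M / p) ^ D₁ := by
    rw [← Real.div_rpow (by positivity) hp0.le]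
  have hpow2 : (2:ℝ) ^ (-D₁) ≤ ((2:ℝ) ^ n * M / p) ^ D₁ := by
    calc (2:ℝ) ^ (-D₁) = ((1:ℝ)/2) ^ D₁ := by
          rw [Real.rpow_neg (by norm_num : (0:ℝ) ≤ 2), one_div,
            Real.inv_rpow (by norm_num : (0:ℝ) ≤ 2)]
      _ ≤ ((2:ℝ) ^ n * M / p) ^ D₁ := Real.rpow_le_rpow (by norm_num) hhalf hD₁0
  -- ψ (2^n M) ≥ 2 ^ (b' n) ψ M ≥ 2^(-b') (p/M)^(b') ψ M
  have hlb2 : (2:ℝ) ^ (-b') * (p / M) ^ b' * ψ M ≤ ψ (2 ^ n * M) := by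
    have h1 : (p / M) ^ b' ≤ ((2:ℝ) ^ (n+1:ℕ)) ^ b' :=
      Real.rpow_le_rpow (by positivity) hn2.le hb'0.le
    have h2 : ((2:ℝ) ^ (n+1:ℕ)) ^ b' = (2:ℝ) ^ (b' * (n+1:ℕ)) := by
      rw [← Real.rpow_natCast 2 (n+1), ← Real.rpow_mul (by norm_num)]
      ring_nf
    have h3 : (2:ℝ) ^ (-b') * (p / M) ^ b' ≤ (2:ℝ) ^ (b' * n) := by
      calc (2:ℝ) ^ (-b') * (p / M) ^ b' ≤ (2:ℝ) ^ (-b') * (2:ℝ) ^ (b' * (n+1:ℕ)) := by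
            rw [← h2]
            exact mul_le_mul_of_nonneg_left h1 (Real.rpow_nonneg (by norm_num) _)
        _ = (2:ℝ) ^ (b' * n) := by
            rw [← Real.rpow_add two_pos]
            push_cast
            ring_nf
    calc (2:ℝ) ^ (-b') * (p / M) ^ b' * ψ M ≤ (2:ℝ) ^ (b' * n) * ψ M :=
          mul_le_mul_of_nonneg_right h3 hψM.le
      _ ≤ ψ (2 ^ n * M) := key n
  -- combine
  calc ψ M * 2 ^ (-(b' + D₁)) * M ^ (-b') * p ^ b'
      = ((2:ℝ) ^ (-b') * (p / M) ^ b' * ψ M) * (2:ℝ) ^ (-D₁) := by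
        have hsplit : (2:ℝ) ^ (-(b' + D₁)) = 2 ^ (-b') * 2 ^ (-D₁) := by
          rw [← Real.rpow_add two_pos]; ring_nf
        rw [Real.div_rpow hp0.le hM0.le, Real.rpow_neg hM0.le, hsplit]
        ring
    _ ≤ ψ (2 ^ n * M) * (((2:ℝ) ^ n * M) ^ D₁ / p ^ D₁) := by
        rw [hbase]
        exact mul_le_mul hlb2 hpow2 (Real.rpow_nonneg (by norm_num) _) hψ2n.le
    _ = ψ (2 ^ n * M) * ((2:ℝ) ^ n * M) ^ D₁ / p ^ D₁ := by ring
    _ ≤ ψ p := hlb1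

lemma abs_le_one_add_sq (t : ℝ) : |t| ≤ 1 + t ^ 2 := by
  rcases abs_cases t with ⟨h, _⟩ | ⟨h, _⟩ <;> nlinarith [sq_nonneg t, sq_nonneg (t-1), sq_nonneg (t+1)]

lemma deriv_psi_int (ψ : ℝ → ℝ)
    (hint1 : MeasureTheory.IntegrableOn (fun l : ℝ => (deriv ψ l) ^ 2) (Set.Ioc (0:ℝ) 1)) :
    MeasureTheory.IntegrableOn (deriv ψ) (Set.Ioc (0:ℝ) 1) := by
  have hmeas : AEStronglyMeasurable (deriv ψ) (volume.restrict (Set.Ioc (0:ℝ) 1)) :=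
    (measurable_deriv ψ).aestronglyMeasurable
  refine MeasureTheory.Integrable.mono' ((MeasureTheory.integrable_const 1).add hint1) hmeas ?_
  exact Filter.Eventually.of_forall fun t => by
    simpa using abs_le_one_add_sq (deriv ψ t)

lemma deriv2_psi_int (ψ : ℝ → ℝ)
    (hint2 : MeasureTheory.IntegrableOn (fun l : ℝ => |deriv (deriv ψ) l|) (Set.Ioc (0:ℝ) 1)) :
    MeasureTheory.IntegrableOn (deriv (deriv ψ)) (Set.Ioc (0:ℝ) 1) := by
  have hmeas : AEStronglyMeasurable (deriv (deriv ψ)) (volume.restrict (Set.Ioc (0:ℝ) 1)) :=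
    (measurable_deriv (deriv ψ)).aestronglyMeasurable
  have h2 : MeasureTheory.IntegrableOn (fun l => ‖deriv (deriv ψ) l‖) (Set.Ioc (0:ℝ) 1) := by
    simpa [Real.norm_eq_abs] using hint2
  exact (MeasureTheory.integrable_norm_iff hmeas).1 h2

lemma deriv_psi_tendsto (ψ : ℝ → ℝ)
    (hnonneg : ∀ p : ℝ, 0 ≤ ψ p)
    (hdiff1 : ∀ p : ℝ, 0 < p → DifferentiableAt ℝ ψ p)
    (hdiff2 : ∀ p : ℝ, 0 < p → DifferentiableAt ℝ (deriv ψ) p)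
    (hint1 : MeasureTheory.IntegrableOn (fun l : ℝ => (deriv ψ l) ^ 2) (Set.Ioc (0:ℝ) 1))
    (hint2 : MeasureTheory.IntegrableOn (fun l : ℝ => |deriv (deriv ψ) l|) (Set.Ioc (0:ℝ) 1))
    (C₀ : ℝ) (hC0 : ∀ p : ℝ, ψ p ≤ C₀ * p ^ 2) :
    Filter.Tendsto (deriv ψ) (nhdsWithin 0 (Set.Ioi 0)) (nhds 0) := by
  have hg := deriv2_psi_int ψ hint2
  have hf := deriv_psi_int ψ hint1
  have hgIcc : MeasureTheory.IntegrableOn (deriv (deriv ψ)) (Set.Icc (0:ℝ) 1) := by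
    rwa [integrableOn_Icc_iff_integrableOn_Ioc]
  have hfIcc : MeasureTheory.IntegrableOn (deriv ψ) (Set.Icc (0:ℝ) 1) := by
    rwa [integrableOn_Icc_iff_integrableOn_Ioc]
  set G : ℝ → ℝ := fun y => ∫ t in (0:ℝ)..y, deriv (deriv ψ) t with hGdef
  set Φ : ℝ → ℝ := fun y => ∫ t in (0:ℝ)..y, deriv ψ t with hΦdef
  have hGcont : ContinuousOn G (Set.Icc (0:ℝ) 1) := by
    have := intervalIntegral.continuousOn_primitive_interval
      (f := deriv (deriv ψ)) (μ := volume) (a := (0:ℝ)) (b := (1:ℝ))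
      (by rwa [Set.uIcc_of_le (zero_le_one (α := ℝ))])
    rwa [Set.uIcc_of_le (zero_le_one (α := ℝ))] at this
  have hΦcont : ContinuousOn Φ (Set.Icc (0:ℝ) 1) := by
    have := intervalIntegral.continuousOn_primitive_interval
      (f := deriv ψ) (μ := volume) (a := (0:ℝ)) (b := (1:ℝ))
      (by rwa [Set.uIcc_of_le (zero_le_one (α := ℝ))])
    rwa [Set.uIcc_of_le (zero_le_one (α := ℝ))] at this
  have hsub : ∀ y c : ℝ, 0 < y → y ≤ c → c ≤ 1 →
      IntervalIntegrable (deriv (deriv ψ)) volume y c ∧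
      IntervalIntegrable (deriv ψ) volume y c := by
    intro y c hy hyc hc1
    constructor
    · rw [intervalIntegrable_iff_integrableOn_Ioc_of_le hyc]
      exact hg.mono (Set.Ioc_subset_Ioc hy.le hc1) le_rfl
    · rw [intervalIntegrable_iff_integrableOn_Ioc_of_le hyc]
      exact hf.mono (Set.Ioc_subset_Ioc hy.le hc1) le_rfl
  -- FTC for deriv ψ
  have hftc2 : ∀ y : ℝ, y ∈ Set.Ioc (0:ℝ) 1 → deriv ψ y = deriv ψ 1 - (G 1 - G y) := by
    intro y hy
    have h1 : (∫ t in y..1, deriv (deriv ψ) t) = deriv ψ 1 - deriv ψ y := by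
      apply intervalIntegral.integral_eq_sub_of_hasDerivAt
      · intro t ht
        rw [Set.uIcc_of_le hy.2] at ht
        exact (hdiff2 t (lt_of_lt_of_le hy.1 ht.1)).hasDerivAt
      · exact (hsub y 1 hy.1 hy.2 le_rfl).1
    have hyint : IntervalIntegrable (deriv (deriv ψ)) volume 0 y :=
      (intervalIntegrable_iff_integrableOn_Ioc_of_le hy.1.le).2
        (hg.mono (Set.Ioc_subset_Ioc le_rfl hy.2) le_rfl)
    have h2 := intervalIntegral.integral_add_adjacent_intervals hyint
      ((hsub y 1 hy.1 hy.2 le_rfl).1)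
    have hGy : G y = ∫ t in (0:ℝ)..y, deriv (deriv ψ) t := rfl
    have hG1 : G 1 = ∫ t in (0:ℝ)..1, deriv (deriv ψ) t := rfl
    rw [hGy, hG1]
    linarith [h1, h2]
  -- FTC for ψ
  have hftc1 : ∀ y p : ℝ, 0 < y → y ≤ p → p ≤ 1 → ψ p - ψ y = Φ p - Φ y := by
    intro y p hy hyp hp1
    have h1 : (∫ t in y..p, deriv ψ t) = ψ p - ψ y := by
      apply intervalIntegral.integral_eq_sub_of_hasDerivAt
      · intro t ht
        rw [Set.uIcc_of_le hyp] at ht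
        exact (hdiff1 t (lt_of_lt_of_le hy ht.1)).hasDerivAt
      · exact (hsub y p hy hyp hp1).2
    have hyint : IntervalIntegrable (deriv ψ) volume 0 y :=
      (intervalIntegrable_iff_integrableOn_Ioc_of_le hy.le).2
        (hf.mono (Set.Ioc_subset_Ioc le_rfl (le_trans hyp hp1)) le_rfl)
    have h2 := intervalIntegral.integral_add_adjacent_intervals hyint
      ((hsub y p hy hyp hp1).2)
    have hΦy : Φ y = ∫ t in (0:ℝ)..y, deriv ψ t := rfl
    have hΦp : Φ p = ∫ t in (0:ℝ)..p, deriv ψ t := rfl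
    rw [hΦy, hΦp]
    linarith [h1, h2]
  -- ψ tends to 0 at 0+
  have hψ0 : Filter.Tendsto ψ (nhdsWithin 0 (Set.Ioi 0)) (nhds 0) := by
    have hb : ∀ y : ℝ, ‖ψ y‖ ≤ C₀ * y ^ 2 := fun y => by
      rw [Real.norm_eq_abs, abs_of_nonneg (hnonneg y)]; exact hC0 y
    have hg0 : Filter.Tendsto (fun y : ℝ => C₀ * y ^ 2) (nhdsWithin 0 (Set.Ioi 0)) (nhds 0) := by
      have hc : Continuous fun y : ℝ => C₀ * y ^ 2 := continuous_const.mul (continuous_pow 2)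
      have h := hc.tendsto (0:ℝ)
      simp only [mul_zero, ne_eq, OfNat.ofNat_ne_zero, not_false_eq_true, zero_pow] at h
      exact h.mono_left nhdsWithin_le_nhds
    exact squeeze_zero_norm hb hg0
  -- limits within
  have hG0 : Filter.Tendsto G (nhdsWithin 0 (Set.Ioi 0)) (nhds 0) := by
    have h0 : G 0 = 0 := intervalIntegral.integral_same
    have := (hGcont 0 (Set.mem_Icc.2 ⟨le_rfl, zero_le_one⟩))
    rw [ContinuousWithinAt, h0] at this
    have heq : nhdsWithin (0:ℝ) (Set.Ioc 0 1) = nhdsWithin 0 (Set.Ioi 0) :=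
      nhdsWithin_Ioc_eq_nhdsGT one_pos
    have h2 : Filter.Tendsto G (nhdsWithin 0 (Set.Ioc 0 1)) (nhds 0) :=
      this.mono_left (nhdsWithin_mono 0 Set.Ioc_subset_Icc_self)
    rwa [heq] at h2
  set L : ℝ := deriv ψ 1 - G 1 with hL
  have hderivL : Filter.Tendsto (deriv ψ) (nhdsWithin 0 (Set.Ioi 0)) (nhds L) := by
    have h1 : Filter.Tendsto (fun y => deriv ψ 1 - (G 1 - G y))
        (nhdsWithin 0 (Set.Ioi 0)) (nhds (deriv ψ 1 - (G 1 - 0))) :=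
      (tendsto_const_nhds.sub (tendsto_const_nhds.sub hG0))
    rw [sub_zero] at h1
    apply h1.congr'
    filter_upwards [Ioc_mem_nhdsGT_of_mem (Set.mem_Ico.2 ⟨le_rfl, one_pos⟩)] with y hy
    exact (hftc2 y hy).symm
  -- ψ p = Φ p on (0,1]
  have hψΦ : ∀ p ∈ Set.Ioc (0:ℝ) 1, ψ p = Φ p := by
    intro p hp
    have h1 : Filter.Tendsto (fun y => ψ p - ψ y) (nhdsWithin 0 (Set.Ioi 0)) (nhds (ψ p)) := by
      have := Filter.Tendsto.sub
        (tendsto_const_nhds : Filter.Tendsto (fun _ : ℝ => ψ p) (nhdsWithin 0 (Set.Ioi 0)) (nhds (ψ p)))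
        hψ0
      simpa using this
    have hΦ0 : Filter.Tendsto Φ (nhdsWithin 0 (Set.Ioi 0)) (nhds 0) := by
      have h0 : Φ 0 = 0 := intervalIntegral.integral_same
      have := (hΦcont 0 (Set.mem_Icc.2 ⟨le_rfl, zero_le_one⟩))
      rw [ContinuousWithinAt, h0] at this
      have h2 : Filter.Tendsto Φ (nhdsWithin 0 (Set.Ioc 0 1)) (nhds 0) :=
        this.mono_left (nhdsWithin_mono 0 Set.Ioc_subset_Icc_self)
      rwa [nhdsWithin_Ioc_eq_nhdsGT one_pos] at h2
    have h2 : Filter.Tendsto (fun y => Φ p - Φ y) (nhdsWithin 0 (Set.Ioi 0)) (nhds (Φ p)) := by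
      have := Filter.Tendsto.sub
        (tendsto_const_nhds : Filter.Tendsto (fun _ : ℝ => Φ p) (nhdsWithin 0 (Set.Ioi 0)) (nhds (Φ p)))
        hΦ0
      simpa using this
    have heq : (fun y => ψ p - ψ y) =ᶠ[nhdsWithin 0 (Set.Ioi 0)] (fun y => Φ p - Φ y) := by
      filter_upwards [Ioc_mem_nhdsGT_of_mem (Set.mem_Ico.2 ⟨le_rfl, hp.1⟩)] with y hy
      exact hftc1 y p hy.1 hy.2 hp.2
    exact tendsto_nhds_unique (h1.congr' heq) h2
  -- ratio tends to L
  have hratioL : Filter.Tendsto (fun p => ψ p / p) (nhdsWithin 0 (Set.Ioi 0)) (nhds L) := by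
    rw [Metric.tendsto_nhdsWithin_nhds]
    intro ε hε
    obtain ⟨δ₀, hδ₀, hδ⟩ := Metric.tendsto_nhdsWithin_nhds.1 hderivL (ε/2) (by positivity)
    refine ⟨min δ₀ 1, by positivity, ?_⟩
    intro p hp hpd
    have hp0 : 0 < p := hp
    have hp1 : p ≤ 1 := by
      have := lt_min_iff.1 (by simpa [abs_of_pos hp0] using hpd)
      exact this.2.le
    have hbound : ∀ t ∈ Set.uIoc (0:ℝ) p, ‖deriv ψ t - L‖ ≤ ε/2 := by
      intro t ht
      rw [Set.uIoc_of_le hp0.le] at ht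
      have : dist (deriv ψ t) L < ε/2 := by
        apply hδ ht.1
        rw [Real.dist_eq, sub_zero, abs_of_pos ht.1]
        exact lt_of_le_of_lt ht.2 (lt_of_le_of_lt (le_of_eq rfl) (by
          have := lt_min_iff.1 (by simpa [abs_of_pos hp0] using hpd)
          exact this.1))
      simpa [Real.dist_eq, Real.norm_eq_abs] using this.le
    have hint : IntervalIntegrable (deriv ψ) volume 0 p := by
      rw [intervalIntegrable_iff_integrableOn_Ioc_of_le hp0.le]
      exact hf.mono (Set.Ioc_subset_Ioc le_rfl hp1) le_rfl
    have hkey : ‖(∫ t in (0:ℝ)..p, (deriv ψ t - L))‖ ≤ ε/2 * |p - 0| :=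
      intervalIntegral.norm_integral_le_of_norm_le_const hbound
    have hsplit : (∫ t in (0:ℝ)..p, (deriv ψ t - L)) = Φ p - L * p := by
      rw [intervalIntegral.integral_sub hint intervalIntegrable_const,
        intervalIntegral.integral_const]
      simp [hΦdef, mul_comm]
    rw [Real.dist_eq]
    have hψp : ψ p = Φ p := hψΦ p ⟨hp0, hp1⟩
    have hfin : True := trivial
    have : |Φ p - L * p| ≤ ε/2 * p := by
      rw [← hsplit]
      simpa [abs_of_pos hp0] using hkey
    have h4 : |ψ p / p - L| ≤ ε / 2 := by
      rw [hψp]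
      have heq : Φ p / p - L = (Φ p - L * p) / p := by field_simp
      rw [heq, abs_div, abs_of_pos hp0, div_le_iff₀ hp0]
      linarith
    linarith
  -- ratio tends to 0
  have hratio0 : Filter.Tendsto (fun p => ψ p / p) (nhdsWithin 0 (Set.Ioi 0)) (nhds 0) := by
    have hb : ∀ᶠ p in nhdsWithin (0:ℝ) (Set.Ioi 0), ‖ψ p / p‖ ≤ C₀ * p := by
      filter_upwards [self_mem_nhdsWithin] with p (hp : (0:ℝ) < p)
      rw [Real.norm_eq_abs, abs_div, abs_of_nonneg (hnonneg p), abs_of_pos hp,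
        div_le_iff₀ hp]
      calc ψ p ≤ C₀ * p ^ 2 := hC0 p
        _ = C₀ * p * p := by ring
    have hg0 : Filter.Tendsto (fun p : ℝ => C₀ * p) (nhdsWithin 0 (Set.Ioi 0)) (nhds 0) := by
      have hc : Continuous fun p : ℝ => C₀ * p := continuous_const.mul continuous_id
      have h := hc.tendsto (0:ℝ)
      simp only [mul_zero] at h
      exact h.mono_left nhdsWithin_le_nhds
    exact squeeze_zero_norm' hb hg0
  have hL0 : L = 0 := tendsto_nhds_unique hratioL hratio0
  rwa [hL0] at hderivL

lemma rpow_neg_anti {u v k : ℝ} (hk : 0 ≤ k) (hv : 0 < v) (huv : v ≤ u) :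
    u ^ (-k) ≤ v ^ (-k) := by
  have hu : 0 < u := lt_of_lt_of_le hv huv
  rw [Real.rpow_neg hu.le, Real.rpow_neg hv.le]
  exact inv_anti₀ (Real.rpow_pos_of_pos hv k) (Real.rpow_le_rpow hv.le huv hk)

lemma exp_tail_bound (ψ : ℝ → ℝ) {M c b' k r : ℝ} (hM : 1 ≤ M) (hc : 0 < c) (hk : 0 < k)
    (hr : 0 < r) (hlb : ∀ p, M ≤ p → c * p ^ b' ≤ ψ p) :
    ∀ p, M ≤ p → Real.exp (-(r * ψ p)) ≤
      ((k / Real.exp 1) ^ k * c ^ (-k) * r ^ (-k)) * p ^ (-(k * b')) := by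
  intro p hp
  have hp0 : (0:ℝ) < p := lt_of_lt_of_le (lt_of_lt_of_le one_pos hM) hp
  have hpb : (0:ℝ) < c * p ^ b' := by positivity
  have h1 : Real.exp (-(r * ψ p)) ≤ Real.exp (-(r * (c * p ^ b'))) := by
    apply Real.exp_le_exp.2
    have := hlb p hp
    nlinarith
  have h2 : Real.exp (-(r * (c * p ^ b'))) ≤ (k / Real.exp 1) ^ k * (r * (c * p ^ b')) ^ (-k) :=
    aux_exp_le hk (by positivity)
  have h3 : (r * (c * p ^ b')) ^ (-k) = r ^ (-k) * c ^ (-k) * p ^ (-(k * b')) := by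
    rw [Real.mul_rpow hr.le hpb.le, Real.mul_rpow hc.le (by positivity),
      ← Real.rpow_mul hp0.le]
    ring_nf
  calc Real.exp (-(r * ψ p)) ≤ (k / Real.exp 1) ^ k * (r * (c * p ^ b')) ^ (-k) := le_trans h1 h2
    _ = ((k / Real.exp 1) ^ k * c ^ (-k) * r ^ (-k)) * p ^ (-(k * b')) := by rw [h3]; ring

lemma integral_split (F : ℝ → ℝ) {M c1 c2 e : ℝ} (hM : 0 < M) (he : e < -1)
    (hmeas : Measurable F)
    (h1 : ∀ p ∈ Set.Ioc (0:ℝ) M, ‖F p‖ ≤ c1)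
    (h2 : ∀ p ∈ Set.Ioi M, ‖F p‖ ≤ c2 * p ^ e) :
    MeasureTheory.IntegrableOn F (Set.Ioi (0:ℝ)) ∧
    (∫ p in Set.Ioi (0:ℝ), F p) ≤ c1 * M + c2 * ∫ p in Set.Ioi M, p ^ e := by
  have hint1 : MeasureTheory.IntegrableOn F (Set.Ioc (0:ℝ) M) := by
    refine MeasureTheory.Integrable.mono' (MeasureTheory.integrable_const c1)
      hmeas.aestronglyMeasurable ?_
    exact (MeasureTheory.ae_restrict_iff' measurableSet_Ioc).2 (Filter.Eventually.of_forall h1)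
  have hrint : MeasureTheory.IntegrableOn (fun p : ℝ => c2 * p ^ e) (Set.Ioi M) :=
    (integrableOn_Ioi_rpow_of_lt he hM).const_mul c2
  have hint2 : MeasureTheory.IntegrableOn F (Set.Ioi M) := by
    refine MeasureTheory.Integrable.mono' hrint hmeas.aestronglyMeasurable ?_
    exact (MeasureTheory.ae_restrict_iff' measurableSet_Ioi).2 (Filter.Eventually.of_forall h2)
  have hunion : Set.Ioc (0:ℝ) M ∪ Set.Ioi M = Set.Ioi (0:ℝ) := Set.Ioc_union_Ioi_eq_Ioi hM.le
  have hdisj : Disjoint (Set.Ioc (0:ℝ) M) (Set.Ioi M) := Set.Ioc_disjoint_Ioi le_rfl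
  have hintall : MeasureTheory.IntegrableOn F (Set.Ioi (0:ℝ)) := by
    rw [← hunion]
    exact hint1.union hint2
  refine ⟨hintall, ?_⟩
  rw [← hunion, MeasureTheory.setIntegral_union hdisj measurableSet_Ioi hint1 hint2]
  have hb1 : (∫ p in Set.Ioc (0:ℝ) M, F p) ≤ c1 * M := by
    have := MeasureTheory.norm_setIntegral_le_of_norm_le_const
      (by rw [Real.volume_Ioc]; exact ENNReal.ofReal_lt_top : volume (Set.Ioc (0:ℝ) M) < ⊤)
      h1 (f := F)
    rw [Real.volume_real_Ioc_of_le hM.le, sub_zero] at this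
    calc (∫ p in Set.Ioc (0:ℝ) M, F p) ≤ ‖∫ p in Set.Ioc (0:ℝ) M, F p‖ := le_abs_self _
      _ ≤ c1 * M := this
  have hb2 : (∫ p in Set.Ioi M, F p) ≤ c2 * ∫ p in Set.Ioi M, p ^ e := by
    rw [← MeasureTheory.integral_const_mul]
    apply MeasureTheory.setIntegral_mono_on hint2 hrint measurableSet_Ioi
    intro p hp
    exact le_trans (le_abs_self _) (h2 p hp)
  linarith

lemma exp_mul_le_one {u : ℝ} (hu : 0 ≤ u) : u * Real.exp (-u) ≤ 1 := by
  have h1 : u + 1 ≤ Real.exp u := Real.add_one_le_exp u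
  have h2 : Real.exp (-u) * Real.exp u = 1 := by
    rw [← Real.exp_add]; simp
  nlinarith [Real.exp_pos (-u), Real.exp_pos u]

lemma sq_exp_le_four {u : ℝ} (hu : 0 ≤ u) : u ^ 2 * Real.exp (-u) ≤ 4 := by
  have h1 : u / 2 + 1 ≤ Real.exp (u / 2) := Real.add_one_le_exp (u / 2)
  have h2 : Real.exp (u/2) * Real.exp (u/2) = Real.exp u := by
    rw [← Real.exp_add]; ring_nf
  have h3 : Real.exp (-u) * Real.exp u = 1 := by rw [← Real.exp_add]; simp
  nlinarith [Real.exp_pos (-u), Real.exp_pos u, Real.exp_pos (u/2)]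

lemma integral_split' (F G : ℝ → ℝ) {c2 e : ℝ} (he : e < -1)
    (hmeasF : Measurable F)
    (hGint : MeasureTheory.IntegrableOn G (Set.Ioc (0:ℝ) 1))
    (h1 : ∀ p ∈ Set.Ioc (0:ℝ) 1, ‖F p‖ ≤ G p)
    (h2 : ∀ p ∈ Set.Ioi (1:ℝ), ‖F p‖ ≤ c2 * p ^ e) :
    MeasureTheory.IntegrableOn F (Set.Ioi (0:ℝ)) ∧
    (∫ p in Set.Ioi (0:ℝ), F p) ≤ (∫ p in Set.Ioc (0:ℝ) 1, G p) + c2 * ∫ p in Set.Ioi (1:ℝ), p ^ e := by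
  have hint1 : MeasureTheory.IntegrableOn F (Set.Ioc (0:ℝ) 1) := by
    refine MeasureTheory.Integrable.mono' hGint hmeasF.aestronglyMeasurable ?_
    exact (MeasureTheory.ae_restrict_iff' measurableSet_Ioc).2 (Filter.Eventually.of_forall h1)
  have hrint : MeasureTheory.IntegrableOn (fun p : ℝ => c2 * p ^ e) (Set.Ioi (1:ℝ)) :=
    (integrableOn_Ioi_rpow_of_lt he one_pos).const_mul c2
  have hint2 : MeasureTheory.IntegrableOn F (Set.Ioi (1:ℝ)) := by
    refine MeasureTheory.Integrable.mono' hrint hmeasF.aestronglyMeasurable ?_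
    exact (MeasureTheory.ae_restrict_iff' measurableSet_Ioi).2 (Filter.Eventually.of_forall h2)
  have hunion : Set.Ioc (0:ℝ) 1 ∪ Set.Ioi (1:ℝ) = Set.Ioi (0:ℝ) := Set.Ioc_union_Ioi_eq_Ioi zero_le_one
  have hdisj : Disjoint (Set.Ioc (0:ℝ) 1) (Set.Ioi (1:ℝ)) := Set.Ioc_disjoint_Ioi le_rfl
  have hintall : MeasureTheory.IntegrableOn F (Set.Ioi (0:ℝ)) := by
    rw [← hunion]; exact hint1.union hint2
  refine ⟨hintall, ?_⟩
  rw [← hunion, MeasureTheory.setIntegral_union hdisj measurableSet_Ioi hint1 hint2]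
  have hb1 : (∫ p in Set.Ioc (0:ℝ) 1, F p) ≤ ∫ p in Set.Ioc (0:ℝ) 1, G p := by
    apply MeasureTheory.setIntegral_mono_on hint1 hGint measurableSet_Ioc
    intro p hp
    exact le_trans (le_abs_self _) (h1 p hp)
  have hb2 : (∫ p in Set.Ioi (1:ℝ), F p) ≤ c2 * ∫ p in Set.Ioi (1:ℝ), p ^ e := by
    rw [← MeasureTheory.integral_const_mul]
    apply MeasureTheory.setIntegral_mono_on hint2 hrint measurableSet_Ioi
    intro p hp
    exact le_trans (le_abs_self _) (h2 p hp)
  linarith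

lemma rpow_neg_two {p : ℝ} (hp : 0 < p) : p ^ (-2:ℝ) = (p ^ 2)⁻¹ := by
  rw [show ((-2:ℝ)) = -((2:ℕ):ℝ) by norm_num, Real.rpow_neg hp.le, Real.rpow_natCast]

lemma g_split (ψ : ℝ → ℝ) (hmeas : Measurable ψ) (hnonneg : ∀ p : ℝ, 0 ≤ ψ p)
    {M c b' k r : ℝ} (hM : 1 ≤ M) (hc : 0 < c) (hk : 0 < k) (hkb' : 1 < k * b') (hr : 0 < r)
    (hlb : ∀ p, M ≤ p → c * p ^ b' ≤ ψ p) :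
    MeasureTheory.IntegrableOn (fun p => Real.exp (-(r * ψ p))) (Set.Ioi (0:ℝ)) ∧
    (∫ p in Set.Ioi (0:ℝ), Real.exp (-(r * ψ p))) ≤
      M + ((k / Real.exp 1) ^ k * c ^ (-k) * r ^ (-k)) *
        ∫ p in Set.Ioi M, p ^ (-(k * b')) := by
  have hmeasF : Measurable fun p => Real.exp (-(r * ψ p)) := ((hmeas.const_mul r).neg).exp
  have h := integral_split (fun p => Real.exp (-(r * ψ p)))
    (lt_of_lt_of_le one_pos hM) (by linarith : -(k * b') < -1) hmeasF
    (c1 := 1) (fun p hp => by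
      rw [Real.norm_eq_abs, abs_of_pos (Real.exp_pos _)]
      exact Real.exp_le_one_iff.2 (by nlinarith [hnonneg p]))
    (fun p hp => by
      rw [Real.norm_eq_abs, abs_of_pos (Real.exp_pos _)]
      exact exp_tail_bound ψ hM hc hk hr hlb p hp.le)
  exact ⟨h.1, by linarith [h.2]⟩

lemma F1_split (ψ : ℝ → ℝ) (hmeas : Measurable ψ) (hnonneg : ∀ p : ℝ, 0 ≤ ψ p)
    {D₁ r : ℝ} (hD1 : ∀ l : ℝ, 1 ≤ l → l * |deriv ψ l| ≤ D₁ * ψ l) (hr : 0 < r)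
    (hint1 : MeasureTheory.IntegrableOn (fun l : ℝ => (deriv ψ l) ^ 2) (Set.Ioc (0:ℝ) 1)) :
    MeasureTheory.IntegrableOn (fun p => (deriv ψ p) ^ 2 * Real.exp (-(r * ψ p))) (Set.Ioi (0:ℝ)) ∧
    (∫ p in Set.Ioi (0:ℝ), (deriv ψ p) ^ 2 * Real.exp (-(r * ψ p))) ≤
      (∫ p in Set.Ioc (0:ℝ) 1, (deriv ψ p) ^ 2) +
        (4 * D₁ ^ 2 / r ^ 2) * ∫ p in Set.Ioi (1:ℝ), p ^ (-2:ℝ) := by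
  have hmeasF : Measurable fun p => (deriv ψ p) ^ 2 * Real.exp (-(r * ψ p)) :=
    ((measurable_deriv ψ).pow_const 2).mul ((hmeas.const_mul r).neg).exp
  exact integral_split' _ _ (by norm_num) hmeasF hint1
    (fun p hp => by
      have hf1 : Real.exp (-(r * ψ p)) ≤ 1 := Real.exp_le_one_iff.2 (by nlinarith [hnonneg p])
      have hf0 : 0 < Real.exp (-(r * ψ p)) := Real.exp_pos _
      rw [Real.norm_eq_abs, abs_of_nonneg (by positivity)]
      nlinarith [sq_nonneg (deriv ψ p)])
    (fun p hp => by
      have hp1 : (1:ℝ) ≤ p := le_of_lt hp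
      have hp0 : (0:ℝ) < p := lt_of_lt_of_le one_pos hp1
      have hf0 : 0 < Real.exp (-(r * ψ p)) := Real.exp_pos _
      have h1 : p * |deriv ψ p| ≤ D₁ * ψ p := hD1 p hp1
      have h2 : (r * ψ p) ^ 2 * Real.exp (-(r * ψ p)) ≤ 4 :=
        sq_exp_le_four (by nlinarith [hnonneg p])
      rw [Real.norm_eq_abs, abs_of_nonneg (by positivity), rpow_neg_two hp0]
      have h1' : 0 ≤ p * |deriv ψ p| := by positivity
      have e1 : (p * |deriv ψ p|) ^ 2 ≤ (D₁ * ψ p) ^ 2 := by nlinarith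
      have e2 : (p * |deriv ψ p|) ^ 2 = p ^ 2 * (deriv ψ p) ^ 2 := by rw [mul_pow, sq_abs]
      have e3 : p ^ 2 * ((deriv ψ p) ^ 2 * Real.exp (-(r * ψ p))) ≤
          D₁ ^ 2 * ((ψ p) ^ 2 * Real.exp (-(r * ψ p))) := by
        have := mul_le_mul_of_nonneg_right e1 hf0.le
        rw [e2] at this
        nlinarith [this]
      have h2' : r ^ 2 * ((ψ p) ^ 2 * Real.exp (-(r * ψ p))) ≤ 4 := by nlinarith [h2]
      have t1 : 0 ≤ D₁ ^ 2 * (4 - r ^ 2 * ((ψ p) ^ 2 * Real.exp (-(r * ψ p)))) :=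
        mul_nonneg (sq_nonneg D₁) (by linarith)
      have t2 : 0 ≤ r ^ 2 * (D₁ ^ 2 * ((ψ p) ^ 2 * Real.exp (-(r * ψ p)))
          - p ^ 2 * ((deriv ψ p) ^ 2 * Real.exp (-(r * ψ p)))) :=
        mul_nonneg (sq_nonneg r) (by linarith)
      have hgoal : (deriv ψ p) ^ 2 * Real.exp (-(r * ψ p)) * (r ^ 2 * p ^ 2) ≤ 4 * D₁ ^ 2 := by
        nlinarith [t1, t2]
      have hrp : (0:ℝ) < r ^ 2 * p ^ 2 := by positivity
      calc (deriv ψ p) ^ 2 * Real.exp (-(r * ψ p))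
          = ((deriv ψ p) ^ 2 * Real.exp (-(r * ψ p)) * (r ^ 2 * p ^ 2)) / (r ^ 2 * p ^ 2) := by
            field_simp
        _ ≤ (4 * D₁ ^ 2) / (r ^ 2 * p ^ 2) := by
            exact div_le_div_of_nonneg_right hgoal hrp.le |>.trans_eq rfl
        _ = 4 * D₁ ^ 2 / r ^ 2 * (p ^ 2)⁻¹ := by ring)

lemma F2_split (ψ : ℝ → ℝ) (hmeas : Measurable ψ) (hnonneg : ∀ p : ℝ, 0 ≤ ψ p)
    {D₂ r : ℝ} (hD2 : ∀ l : ℝ, 1 ≤ l → l ^ 2 * |deriv (deriv ψ) l| ≤ D₂ * ψ l) (hr : 0 < r)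
    (hψ1 : 0 < ψ 1)
    (hint2 : MeasureTheory.IntegrableOn (fun l : ℝ => |deriv (deriv ψ) l|) (Set.Ioc (0:ℝ) 1)) :
    MeasureTheory.IntegrableOn
      (fun p => |deriv (deriv ψ) p| * Real.exp (-(r * ψ p))) (Set.Ioi (0:ℝ)) ∧
    (∫ p in Set.Ioi (0:ℝ), |deriv (deriv ψ) p| * Real.exp (-(r * ψ p))) ≤
      (∫ p in Set.Ioc (0:ℝ) 1, |deriv (deriv ψ) p|) +
        (D₂ / r) * ∫ p in Set.Ioi (1:ℝ), p ^ (-2:ℝ) := by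
  have hmeasF : Measurable fun p => |deriv (deriv ψ) p| * Real.exp (-(r * ψ p)) :=
    ((measurable_deriv (deriv ψ)).abs).mul ((hmeas.const_mul r).neg).exp
  exact integral_split' _ _ (by norm_num) hmeasF hint2
    (fun p hp => by
      have hf1 : Real.exp (-(r * ψ p)) ≤ 1 := Real.exp_le_one_iff.2 (by nlinarith [hnonneg p])
      have hf0 : 0 < Real.exp (-(r * ψ p)) := Real.exp_pos _
      rw [Real.norm_eq_abs, abs_of_nonneg (by positivity)]
      nlinarith [abs_nonneg (deriv (deriv ψ) p)])
    (fun p hp => by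
      have hp1 : (1:ℝ) ≤ p := le_of_lt hp
      have hp0 : (0:ℝ) < p := lt_of_lt_of_le one_pos hp1
      have hf0 : 0 < Real.exp (-(r * ψ p)) := Real.exp_pos _
      have h1 : p ^ 2 * |deriv (deriv ψ) p| ≤ D₂ * ψ p := hD2 p hp1
      have h2 : (r * ψ p) * Real.exp (-(r * ψ p)) ≤ 1 :=
        exp_mul_le_one (by nlinarith [hnonneg p])
      rw [Real.norm_eq_abs, abs_of_nonneg (by positivity), rpow_neg_two hp0]
      have hD₂0 : 0 ≤ D₂ := by
        have := hD2 1 le_rfl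
        nlinarith [abs_nonneg (deriv (deriv ψ) 1), hψ1]
      have e3 : p ^ 2 * (|deriv (deriv ψ) p| * Real.exp (-(r * ψ p))) ≤
          D₂ * (ψ p * Real.exp (-(r * ψ p))) := by
        have := mul_le_mul_of_nonneg_right h1 hf0.le
        nlinarith [this]
      have h2' : r * (ψ p * Real.exp (-(r * ψ p))) ≤ 1 := by nlinarith [h2]
      have t1 : 0 ≤ D₂ * (1 - r * (ψ p * Real.exp (-(r * ψ p)))) :=
        mul_nonneg hD₂0 (by linarith)
      have t2 : 0 ≤ r * (D₂ * (ψ p * Real.exp (-(r * ψ p)))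
          - p ^ 2 * (|deriv (deriv ψ) p| * Real.exp (-(r * ψ p)))) :=
        mul_nonneg hr.le (by linarith)
      have hgoal : |deriv (deriv ψ) p| * Real.exp (-(r * ψ p)) * (r * p ^ 2) ≤ D₂ := by
        nlinarith [t1, t2]
      have hrp : (0:ℝ) < r * p ^ 2 := by positivity
      calc |deriv (deriv ψ) p| * Real.exp (-(r * ψ p))
          = (|deriv (deriv ψ) p| * Real.exp (-(r * ψ p)) * (r * p ^ 2)) / (r * p ^ 2) := by
            field_simp
        _ ≤ D₂ / (r * p ^ 2) := div_le_div_of_nonneg_right hgoal hrp.le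
        _ = D₂ / r * (p ^ 2)⁻¹ := by ring)

lemma ibp_identity (ψ : ℝ → ℝ) (hmeas : Measurable ψ) (hnonneg : ∀ p : ℝ, 0 ≤ ψ p)
    (hψ1 : 0 < ψ 1)
    (hdiff1 : ∀ p : ℝ, 0 < p → DifferentiableAt ℝ ψ p)
    (hdiff2 : ∀ p : ℝ, 0 < p → DifferentiableAt ℝ (deriv ψ) p)
    (hd0 : Filter.Tendsto (deriv ψ) (nhdsWithin 0 (Set.Ioi 0)) (nhds 0))
    {D₁ D₂ : ℝ}
    (hD1 : ∀ l : ℝ, 1 ≤ l → l * |deriv ψ l| ≤ D₁ * ψ l)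
    (hD2 : ∀ l : ℝ, 1 ≤ l → l ^ 2 * |deriv (deriv ψ) l| ≤ D₂ * ψ l)
    (hint1 : MeasureTheory.IntegrableOn (fun l : ℝ => (deriv ψ l) ^ 2) (Set.Ioc (0:ℝ) 1))
    (hint2 : MeasureTheory.IntegrableOn (fun l : ℝ => |deriv (deriv ψ) l|) (Set.Ioc (0:ℝ) 1))
    {M c b' k r x : ℝ} (hM : 1 ≤ M) (hc : 0 < c) (hk : 0 < k) (hkb' : 1 < k * b')
    (hr : 0 < r) (hlb : ∀ p, M ≤ p → c * p ^ b' ≤ ψ p) (hx : x ≠ 0) :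
    (∫ p in Set.Ioi (0:ℝ), Real.cos (p * x) * Real.exp (-(r * ψ p)))
      = -(1/x^2) * ∫ p in Set.Ioi (0:ℝ), Real.cos (p * x) *
          ((r^2 * (deriv ψ p)^2 - r * deriv (deriv ψ) p) * Real.exp (-(r * ψ p))) := by
  have hx2 : (0:ℝ) < x ^ 2 := by positivity
  set f : ℝ → ℝ := fun p => Real.exp (-(r * ψ p)) with hfdef
  set f1 : ℝ → ℝ := fun p => -(r * deriv ψ p) * f p with hf1def
  set f2 : ℝ → ℝ := fun p =>
    (r^2 * (deriv ψ p)^2 - r * deriv (deriv ψ) p) * f p with hf2def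
  set W : ℝ → ℝ := fun p => if p ≤ 0 then 0 else
    Real.sin (p*x)/x * f p + Real.cos (p*x)/x^2 * f1 p with hWdef
  have hfpos : ∀ p, 0 < f p := fun p => Real.exp_pos _
  have hfle1 : ∀ p, f p ≤ 1 := fun p =>
    Real.exp_le_one_iff.2 (by nlinarith [hnonneg p])
  -- integrability pieces
  have hgint := (g_split ψ hmeas hnonneg hM hc hk hkb' hr hlb).1
  have hF1int := (F1_split ψ hmeas hnonneg hD1 hr hint1).1
  have hF2int := (F2_split ψ hmeas hnonneg hD2 hr hψ1 hint2).1
  have hmeasf : Measurable f := ((hmeas.const_mul r).neg).exp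
  have hmeascos : Measurable fun p : ℝ => Real.cos (p * x) :=
    (measurable_id.mul_const x).cos
  have hmeasf2 : Measurable f2 :=
    ((((measurable_deriv ψ).pow_const 2).const_mul (r^2)).sub
      ((measurable_deriv (deriv ψ)).const_mul r)).mul hmeasf
  -- dominator for f2-type integrands
  have hdom : MeasureTheory.IntegrableOn
      (fun p => r^2 * ((deriv ψ p)^2 * f p) + r * (|deriv (deriv ψ) p| * f p))
      (Set.Ioi (0:ℝ)) :=
    (hF1int.const_mul (r^2)).add (hF2int.const_mul r)
  have hf2bound : ∀ p, ‖Real.cos (p * x) * f2 p‖ ≤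
      r^2 * ((deriv ψ p)^2 * f p) + r * (|deriv (deriv ψ) p| * f p) := by
    intro p
    rw [Real.norm_eq_abs, abs_mul, abs_mul]
    have h1 : |Real.cos (p*x)| ≤ 1 := Real.abs_cos_le_one _
    have h2 : |r^2 * (deriv ψ p)^2 - r * deriv (deriv ψ) p| ≤
        r^2 * (deriv ψ p)^2 + r * |deriv (deriv ψ) p| := by
      calc |r^2 * (deriv ψ p)^2 - r * deriv (deriv ψ) p|
          ≤ |r^2 * (deriv ψ p)^2| + |r * deriv (deriv ψ) p| := abs_sub _ _
        _ = r^2 * (deriv ψ p)^2 + r * |deriv (deriv ψ) p| := by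
            rw [abs_of_nonneg (by positivity), abs_mul, abs_of_pos hr]
    have h3 : |f p| = f p := abs_of_pos (hfpos p)
    rw [h3]
    have h4 : |r ^ 2 * deriv ψ p ^ 2 - r * deriv (deriv ψ) p| * f p ≤
        (r^2 * (deriv ψ p)^2 + r * |deriv (deriv ψ) p|) * f p :=
      mul_le_mul_of_nonneg_right h2 (hfpos p).le
    nlinarith [abs_nonneg (r ^ 2 * deriv ψ p ^ 2 - r * deriv (deriv ψ) p),
      (hfpos p).le, h4, mul_le_mul_of_nonneg_right
        (mul_le_mul_of_nonneg_right h1 (abs_nonneg (r ^ 2 * deriv ψ p ^ 2 - r * deriv (deriv ψ) p)))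
        (hfpos p).le]
  have hI2 : MeasureTheory.IntegrableOn (fun p => Real.cos (p * x) * f2 p) (Set.Ioi (0:ℝ)) := by
    refine MeasureTheory.Integrable.mono' hdom (hmeascos.mul hmeasf2).aestronglyMeasurable ?_
    exact Filter.Eventually.of_forall hf2bound
  have hI1 : MeasureTheory.IntegrableOn (fun p => Real.cos (p * x) * f p) (Set.Ioi (0:ℝ)) := by
    refine MeasureTheory.Integrable.mono' hgint (hmeascos.mul hmeasf).aestronglyMeasurable ?_
    refine Filter.Eventually.of_forall fun p => ?_
    rw [Real.norm_eq_abs, abs_mul, abs_of_pos (hfpos p)]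
    nlinarith [Real.abs_cos_le_one (p*x), (hfpos p).le, abs_nonneg (Real.cos (p*x))]
  -- derivative of W on Ioi 0
  have hW : ∀ p ∈ Set.Ioi (0:ℝ), HasDerivAt W
      (Real.cos (p*x) * f p + Real.cos (p*x)/x^2 * f2 p) p := by
    intro p hp
    have hp0 : (0:ℝ) < p := hp
    have hψd : HasDerivAt ψ (deriv ψ p) p := (hdiff1 p hp0).hasDerivAt
    have hψd2 : HasDerivAt (deriv ψ) (deriv (deriv ψ) p) p := (hdiff2 p hp0).hasDerivAt
    have hfd : HasDerivAt f (f p * -(r * deriv ψ p)) p := ((hψd.const_mul r).neg).exp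
    have hf1d : HasDerivAt f1
        (-(r * deriv (deriv ψ) p) * f p + -(r * deriv ψ p) * (f p * -(r * deriv ψ p))) p :=
      ((hψd2.const_mul r).neg).mul hfd
    have hlin : HasDerivAt (fun q : ℝ => q * x) x p := hasDerivAt_mul_const x
    have hsin : HasDerivAt (fun q : ℝ => Real.sin (q*x)) (Real.cos (p*x) * x) p :=
      (show HasDerivAt (Real.sin ∘ fun q : ℝ => q * x) (Real.cos (p*x) * x) p from
        (Real.hasDerivAt_sin (p*x)).comp p hlin)
    have hcos : HasDerivAt (fun q : ℝ => Real.cos (q*x)) (-Real.sin (p*x) * x) p :=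
      (show HasDerivAt (Real.cos ∘ fun q : ℝ => q * x) (-Real.sin (p*x) * x) p from
        (Real.hasDerivAt_cos (p*x)).comp p hlin)
    have hE : HasDerivAt (fun q => Real.sin (q*x)/x * f q + Real.cos (q*x)/x^2 * f1 q)
        ((Real.cos (p*x) * x / x) * f p + Real.sin (p*x)/x * (f p * -(r * deriv ψ p))
          + ((-Real.sin (p*x) * x) / x^2 * f1 p + Real.cos (p*x)/x^2 *
            (-(r * deriv (deriv ψ) p) * f p + -(r * deriv ψ p) * (f p * -(r * deriv ψ p))))) p :=
      ((hsin.div_const x).mul hfd).add ((hcos.div_const (x^2)).mul hf1d)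
    have hWE : W =ᶠ[nhds p] fun q => Real.sin (q*x)/x * f q + Real.cos (q*x)/x^2 * f1 q := by
      filter_upwards [IsOpen.mem_nhds isOpen_Ioi hp] with q (hq : 0 < q)
      rw [hWdef]
      simp only [not_le.2 hq, if_false]
    refine (hE.congr_of_eventuallyEq hWE).congr_deriv ?_
    have hf1p : f1 p = -(r * deriv ψ p) * f p := rfl
    have hf2p : f2 p = (r^2 * (deriv ψ p)^2 - r * deriv (deriv ψ) p) * f p := rfl
    rw [hf1p, hf2p]
    field_simp
    ring
  -- continuity at 0 within [0,∞)
  have hcont : ContinuousWithinAt W (Set.Ici 0) 0 := by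
    have hIci : Set.Ici (0:ℝ) = insert 0 (Set.Ioi 0) := Set.Ioi_insert.symm
    rw [ContinuousWithinAt]
    have hW0 : W 0 = 0 := by rw [hWdef]; simp
    rw [hW0, hIci, nhdsWithin_insert]
    rw [Filter.tendsto_sup]
    constructor
    · have h := tendsto_pure_nhds W 0
      rwa [hW0] at h
    · have hb : ∀ᶠ p in nhdsWithin (0:ℝ) (Set.Ioi 0),
          ‖W p‖ ≤ |p| + (1/x^2) * (r * |deriv ψ p|) := by
        filter_upwards [self_mem_nhdsWithin] with p (hp : (0:ℝ) < p)
        rw [hWdef]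
        simp only [not_le.2 hp, if_false]
        have e1 : ‖Real.sin (p*x)/x * f p‖ ≤ |p| := by
          rw [Real.norm_eq_abs, abs_mul, abs_div]
          have h1 : |Real.sin (p*x)| ≤ |p*x| := Real.abs_sin_le_abs
          have h2 : |f p| ≤ 1 := by rw [abs_of_pos (hfpos p)]; exact hfle1 p
          have hxa : 0 < |x| := abs_pos.2 hx
          have hstep : |Real.sin (p*x)|/|x| * |f p| ≤ |p*x|/|x| * 1 :=
            mul_le_mul (div_le_div_of_nonneg_right h1 hxa.le) h2 (abs_nonneg _) (by positivity)
          have heq : |p*x|/|x| * 1 = |p| := by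
            rw [abs_mul, mul_one, mul_div_assoc, div_self hxa.ne', mul_one]
          exact le_trans hstep (le_of_eq heq)
        have e2 : ‖Real.cos (p*x)/x^2 * f1 p‖ ≤ (1/x^2) * (r * |deriv ψ p|) := by
          have hf1p : f1 p = -(r * deriv ψ p) * f p := rfl
          have heq : ‖Real.cos (p*x)/x^2 * f1 p‖
              = |Real.cos (p*x)|/x^2 * (r * |deriv ψ p| * f p) := by
            rw [hf1p, Real.norm_eq_abs, abs_mul, abs_div, abs_of_pos hx2, abs_mul, abs_neg,
              abs_mul, abs_of_pos hr, abs_of_pos (hfpos p)]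
            try ring
          rw [heq]
          have h2 : r * |deriv ψ p| * f p ≤ r * |deriv ψ p| := by
            nlinarith [mul_le_mul_of_nonneg_left (hfle1 p)
              (by positivity : (0:ℝ) ≤ r * |deriv ψ p|)]
          exact mul_le_mul (div_le_div_of_nonneg_right (Real.abs_cos_le_one _) hx2.le) h2
            (by positivity) (by positivity)
        calc ‖Real.sin (p*x)/x * f p + Real.cos (p*x)/x^2 * f1 p‖
            ≤ ‖Real.sin (p*x)/x * f p‖ + ‖Real.cos (p*x)/x^2 * f1 p‖ := norm_add_le _ _
          _ ≤ |p| + (1/x^2) * (r * |deriv ψ p|) := add_le_add e1 e2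
      refine squeeze_zero_norm' hb ?_
      have h1 : Filter.Tendsto (fun p : ℝ => |p|) (nhdsWithin 0 (Set.Ioi 0)) (nhds 0) := by
        have := continuous_abs.tendsto (0:ℝ)
        simpa using this.mono_left nhdsWithin_le_nhds
      have h2 : Filter.Tendsto (fun p => (1/x^2) * (r * |deriv ψ p|))
          (nhdsWithin 0 (Set.Ioi 0)) (nhds 0) := by
        have habs : Filter.Tendsto (fun p => |deriv ψ p|) (nhdsWithin 0 (Set.Ioi 0)) (nhds 0) := by
          have := hd0.abs
          simpa using this
        have := (habs.const_mul r).const_mul (1/x^2)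
        simpa using this
      have := h1.add h2
      simpa using this
  -- tendsto at top
  have htop : Filter.Tendsto W Filter.atTop (nhds 0) := by
    set CR := (k / Real.exp 1) ^ k * c ^ (-k) * r ^ (-k) with hCR
    have hb : ∀ᶠ p in Filter.atTop,
        ‖W p‖ ≤ (1/|x|) * (CR * p ^ (-(k * b'))) + (1/x^2) * (D₁ * p⁻¹) := by
      filter_upwards [Filter.eventually_ge_atTop (max M 1)] with p hp
      have hpM : M ≤ p := le_trans (le_max_left _ _) hp
      have hp1 : (1:ℝ) ≤ p := le_trans (le_max_right _ _) hp
      have hp0 : (0:ℝ) < p := lt_of_lt_of_le one_pos hp1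
      rw [hWdef]
      simp only [not_le.2 hp0, if_false]
      have e1 : ‖Real.sin (p*x)/x * f p‖ ≤ (1/|x|) * (CR * p ^ (-(k * b'))) := by
        rw [Real.norm_eq_abs, abs_mul, abs_div, abs_of_pos (hfpos p)]
        have h2 : f p ≤ CR * p ^ (-(k*b')) := exp_tail_bound ψ hM hc hk hr hlb p hpM
        have hxa : 0 < |x| := abs_pos.2 hx
        exact mul_le_mul (div_le_div_of_nonneg_right (Real.abs_sin_le_one _) hxa.le) h2
          (hfpos p).le (by positivity)
      have e2 : ‖Real.cos (p*x)/x^2 * f1 p‖ ≤ (1/x^2) * (D₁ * p⁻¹) := by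
        have hf1p : f1 p = -(r * deriv ψ p) * f p := rfl
        have heq : ‖Real.cos (p*x)/x^2 * f1 p‖
            = |Real.cos (p*x)|/x^2 * (r * |deriv ψ p| * f p) := by
          rw [hf1p, Real.norm_eq_abs, abs_mul, abs_div, abs_of_pos hx2, abs_mul, abs_neg,
            abs_mul, abs_of_pos hr, abs_of_pos (hfpos p)]
          try ring
        rw [heq]
        have h2 : r * |deriv ψ p| * f p ≤ D₁ * p⁻¹ := by
          have hb : p * |deriv ψ p| ≤ D₁ * ψ p := hD1 p hp1
          have hc2 : (r * ψ p) * f p ≤ 1 := exp_mul_le_one (by nlinarith [hnonneg p])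
          have step : p * (r * |deriv ψ p| * f p) ≤ D₁ * ((r * ψ p) * f p) := by
            have := mul_le_mul_of_nonneg_right hb (mul_nonneg hr.le (hfpos p).le)
            nlinarith [this]
          have hD₁0 : 0 ≤ D₁ := by
            have := hD1 1 le_rfl
            nlinarith [abs_nonneg (deriv ψ 1), hψ1]
          have step2 : p * (r * |deriv ψ p| * f p) ≤ D₁ :=
            le_trans step (by nlinarith [hc2, hD₁0])
          calc r * |deriv ψ p| * f p = p * (r * |deriv ψ p| * f p) / p := by field_simp
            _ ≤ D₁ / p := div_le_div_of_nonneg_right step2 hp0.le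
            _ = D₁ * p⁻¹ := by ring
        exact mul_le_mul (div_le_div_of_nonneg_right (Real.abs_cos_le_one _) hx2.le) h2
          (by positivity) (by positivity)
      calc ‖Real.sin (p*x)/x * f p + Real.cos (p*x)/x^2 * f1 p‖
          ≤ ‖Real.sin (p*x)/x * f p‖ + ‖Real.cos (p*x)/x^2 * f1 p‖ := norm_add_le _ _
        _ ≤ (1/|x|) * (CR * p ^ (-(k * b'))) + (1/x^2) * (D₁ * p⁻¹) := add_le_add e1 e2
    refine squeeze_zero_norm' hb ?_
    have h1 : Filter.Tendsto (fun p : ℝ => (1/|x|) * (CR * p ^ (-(k * b'))))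
        Filter.atTop (nhds 0) := by
      have t1 := (tendsto_rpow_neg_atTop (by linarith : (0:ℝ) < k * b')).const_mul CR
      have t2 := t1.const_mul (1/|x|)
      simpa [mul_assoc] using t2
    have h2 : Filter.Tendsto (fun p : ℝ => (1/x^2) * (D₁ * p⁻¹)) Filter.atTop (nhds 0) := by
      have t1 := tendsto_inv_atTop_zero (𝕜 := ℝ) |>.const_mul D₁
      have t2 := t1.const_mul (1/x^2)
      simpa [mul_assoc] using t2
    have := h1.add h2
    simpa using this
  -- integrability of W'
  have hWdint : MeasureTheory.IntegrableOn
      (fun p => Real.cos (p*x) * f p + Real.cos (p*x)/x^2 * f2 p) (Set.Ioi (0:ℝ)) := by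
    apply hI1.add
    have : (fun p => Real.cos (p*x)/x^2 * f2 p) = fun p => (1/x^2) * (Real.cos (p*x) * f2 p) := by
      funext p; ring
    rw [this]
    exact hI2.const_mul _
  -- FTC
  have hftc := MeasureTheory.integral_Ioi_of_hasDerivAt_of_tendsto hcont hW hWdint htop
  have hW0 : W 0 = 0 := by rw [hWdef]; simp
  rw [hW0, sub_zero] at hftc
  -- split the integral
  have hsplit : (∫ p in Set.Ioi (0:ℝ), (Real.cos (p*x) * f p + Real.cos (p*x)/x^2 * f2 p))
      = (∫ p in Set.Ioi (0:ℝ), Real.cos (p*x) * f p)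
        + (1/x^2) * ∫ p in Set.Ioi (0:ℝ), Real.cos (p*x) * f2 p := by
    rw [MeasureTheory.integral_add hI1]
    · congr 1
      have : (fun p => Real.cos (p*x)/x^2 * f2 p) = fun p => (1/x^2) * (Real.cos (p*x) * f2 p) := by
        funext p; ring
      rw [this, MeasureTheory.integral_const_mul]
    · have : (fun p => Real.cos (p*x)/x^2 * f2 p) = fun p => (1/x^2) * (Real.cos (p*x) * f2 p) := by
        funext p; ring
      rw [this]
      exact hI2.const_mul _
  rw [hsplit] at hftc
  have : (∫ p in Set.Ioi (0:ℝ), Real.cos (p*x) * f p)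
      = -(1/x^2) * ∫ p in Set.Ioi (0:ℝ), Real.cos (p*x) * f2 p := by linarith
  exact this

lemma Abound (ψ : ℝ → ℝ) (hmeas : Measurable ψ) (hnonneg : ∀ p : ℝ, 0 ≤ ψ p)
    {M c b' k r x : ℝ} (hM : 1 ≤ M) (hc : 0 < c) (hk : 0 < k) (hkb' : 1 < k * b')
    (hr : 0 < r) (hr3 : r ≤ 3) (hlb : ∀ p, M ≤ p → c * p ^ b' ≤ ψ p) :
    |∫ p in Set.Ioi (0:ℝ), Real.cos (p * x) * Real.exp (-(r * ψ p))|
      ≤ (M * 3 ^ k + ((k / Real.exp 1) ^ k * c ^ (-k)) * ∫ p in Set.Ioi M, p ^ (-(k * b')))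
        * r ^ (-k) := by
  have hg := g_split ψ hmeas hnonneg hM hc hk hkb' hr hlb
  have habs : |∫ p in Set.Ioi (0:ℝ), Real.cos (p * x) * Real.exp (-(r * ψ p))|
      ≤ ∫ p in Set.Ioi (0:ℝ), Real.exp (-(r * ψ p)) := by
    rw [← Real.norm_eq_abs]
    apply MeasureTheory.norm_integral_le_of_norm_le hg.1
    refine Filter.Eventually.of_forall fun p => ?_
    rw [Real.norm_eq_abs, abs_mul, abs_of_pos (Real.exp_pos _)]
    nlinarith [Real.abs_cos_le_one (p*x), (Real.exp_pos (-(r * ψ p))).le,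
      abs_nonneg (Real.cos (p*x))]
  have h3 : (3:ℝ) ^ (-k) ≤ r ^ (-k) := rpow_neg_anti hk.le hr hr3
  have h3k : (3:ℝ) ^ k * (3:ℝ) ^ (-k) = 1 := by
    rw [← Real.rpow_add (by norm_num : (0:ℝ) < 3)]
    simp
  have hM0 : (0:ℝ) < M := lt_of_lt_of_le one_pos hM
  have h3kpos : (0:ℝ) < (3:ℝ) ^ k := Real.rpow_pos_of_pos (by norm_num) k
  have hMle : M ≤ M * 3 ^ k * r ^ (-k) := by
    calc M = M * ((3:ℝ) ^ k * (3:ℝ) ^ (-k)) := by rw [h3k, mul_one]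
      _ ≤ M * ((3:ℝ) ^ k * r ^ (-k)) := by
          apply mul_le_mul_of_nonneg_left _ hM0.le
          exact mul_le_mul_of_nonneg_left h3 h3kpos.le
      _ = M * 3 ^ k * r ^ (-k) := by ring
  have hrk : (0:ℝ) < r ^ (-k) := Real.rpow_pos_of_pos hr _
  calc |∫ p in Set.Ioi (0:ℝ), Real.cos (p * x) * Real.exp (-(r * ψ p))|
      ≤ ∫ p in Set.Ioi (0:ℝ), Real.exp (-(r * ψ p)) := habs
    _ ≤ M + ((k / Real.exp 1) ^ k * c ^ (-k) * r ^ (-k)) *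
        ∫ p in Set.Ioi M, p ^ (-(k * b')) := hg.2
    _ ≤ (M * 3 ^ k + ((k / Real.exp 1) ^ k * c ^ (-k)) * ∫ p in Set.Ioi M, p ^ (-(k * b')))
        * r ^ (-k) := by
        have hJ : 0 ≤ ∫ p in Set.Ioi M, p ^ (-(k * b')) := by
          apply MeasureTheory.setIntegral_nonneg measurableSet_Ioi
          intro p hp
          exact Real.rpow_nonneg (le_of_lt (lt_trans hM0 hp)) _
        have hAE : (0:ℝ) ≤ (k / Real.exp 1) ^ k * c ^ (-k) := by positivity
        nlinarith [hMle, mul_le_mul_of_nonneg_left h3 (mul_nonneg hAE hJ)]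

lemma Qbound (ψ : ℝ → ℝ) (hmeas : Measurable ψ) (hnonneg : ∀ p : ℝ, 0 ≤ ψ p)
    (hψ1 : 0 < ψ 1) {D₁ D₂ x : ℝ}
    (hD1 : ∀ l : ℝ, 1 ≤ l → l * |deriv ψ l| ≤ D₁ * ψ l)
    (hD2 : ∀ l : ℝ, 1 ≤ l → l ^ 2 * |deriv (deriv ψ) l| ≤ D₂ * ψ l)
    (hint1 : MeasureTheory.IntegrableOn (fun l : ℝ => (deriv ψ l) ^ 2) (Set.Ioc (0:ℝ) 1))
    (hint2 : MeasureTheory.IntegrableOn (fun l : ℝ => |deriv (deriv ψ) l|) (Set.Ioc (0:ℝ) 1))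
    {r : ℝ} (hr : 0 < r) (hr3 : r ≤ 3) :
    |∫ p in Set.Ioi (0:ℝ), Real.cos (p * x) *
        ((r^2 * (deriv ψ p)^2 - r * deriv (deriv ψ) p) * Real.exp (-(r * ψ p)))|
      ≤ 9 * (∫ p in Set.Ioc (0:ℝ) 1, (deriv ψ p)^2)
        + 4 * D₁^2 * (∫ p in Set.Ioi (1:ℝ), p ^ (-2:ℝ))
        + 3 * (∫ p in Set.Ioc (0:ℝ) 1, |deriv (deriv ψ) p|)
        + D₂ * (∫ p in Set.Ioi (1:ℝ), p ^ (-2:ℝ)) := by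
  have hF1 := F1_split ψ hmeas hnonneg hD1 hr hint1
  have hF2 := F2_split ψ hmeas hnonneg hD2 hr hψ1 hint2
  set f : ℝ → ℝ := fun p => Real.exp (-(r * ψ p)) with hfdef
  have hfpos : ∀ p, 0 < f p := fun p => Real.exp_pos _
  have hdom : MeasureTheory.IntegrableOn
      (fun p => r^2 * ((deriv ψ p)^2 * f p) + r * (|deriv (deriv ψ) p| * f p))
      (Set.Ioi (0:ℝ)) := (hF1.1.const_mul (r^2)).add (hF2.1.const_mul r)
  have habs : |∫ p in Set.Ioi (0:ℝ), Real.cos (p * x) *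
      ((r^2 * (deriv ψ p)^2 - r * deriv (deriv ψ) p) * f p)|
      ≤ ∫ p in Set.Ioi (0:ℝ),
          (r^2 * ((deriv ψ p)^2 * f p) + r * (|deriv (deriv ψ) p| * f p)) := by
    rw [← Real.norm_eq_abs]
    apply MeasureTheory.norm_integral_le_of_norm_le hdom
    refine Filter.Eventually.of_forall fun p => ?_
    rw [Real.norm_eq_abs, abs_mul, abs_mul]
    have h1 : |Real.cos (p*x)| ≤ 1 := Real.abs_cos_le_one _
    have h2 : |r^2 * (deriv ψ p)^2 - r * deriv (deriv ψ) p| ≤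
        r^2 * (deriv ψ p)^2 + r * |deriv (deriv ψ) p| := by
      calc |r^2 * (deriv ψ p)^2 - r * deriv (deriv ψ) p|
          ≤ |r^2 * (deriv ψ p)^2| + |r * deriv (deriv ψ) p| := abs_sub _ _
        _ = r^2 * (deriv ψ p)^2 + r * |deriv (deriv ψ) p| := by
            rw [abs_of_nonneg (by positivity), abs_mul, abs_of_pos hr]
    rw [abs_of_pos (hfpos p)]
    have h4 := mul_le_mul_of_nonneg_right h2 (hfpos p).le
    nlinarith [abs_nonneg (r ^ 2 * deriv ψ p ^ 2 - r * deriv (deriv ψ) p), (hfpos p).le,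
      mul_le_mul_of_nonneg_right
        (mul_le_mul_of_nonneg_right h1 (abs_nonneg (r ^ 2 * deriv ψ p ^ 2 - r * deriv (deriv ψ) p)))
        (hfpos p).le]
  have hsplit : (∫ p in Set.Ioi (0:ℝ),
      (r^2 * ((deriv ψ p)^2 * f p) + r * (|deriv (deriv ψ) p| * f p)))
      = r^2 * (∫ p in Set.Ioi (0:ℝ), (deriv ψ p)^2 * f p)
        + r * (∫ p in Set.Ioi (0:ℝ), |deriv (deriv ψ) p| * f p) := by
    rw [MeasureTheory.integral_add (hF1.1.const_mul (r^2)) (hF2.1.const_mul r),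
      MeasureTheory.integral_const_mul, MeasureTheory.integral_const_mul]
  have hI1 : 0 ≤ ∫ p in Set.Ioc (0:ℝ) 1, (deriv ψ p)^2 :=
    MeasureTheory.integral_nonneg fun p => sq_nonneg _
  have hI2 : 0 ≤ ∫ p in Set.Ioc (0:ℝ) 1, |deriv (deriv ψ) p| :=
    MeasureTheory.integral_nonneg fun p => abs_nonneg _
  have hJ2 : 0 ≤ ∫ p in Set.Ioi (1:ℝ), p ^ (-2:ℝ) := by
    apply MeasureTheory.setIntegral_nonneg measurableSet_Ioi
    intro p hp
    exact Real.rpow_nonneg (le_of_lt (lt_trans one_pos hp)) _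
  have hD₂0 : 0 ≤ D₂ := by
    have := hD2 1 le_rfl
    nlinarith [abs_nonneg (deriv (deriv ψ) 1), hψ1]
  have hb1 : r^2 * (∫ p in Set.Ioi (0:ℝ), (deriv ψ p)^2 * f p)
      ≤ 9 * (∫ p in Set.Ioc (0:ℝ) 1, (deriv ψ p)^2)
        + 4 * D₁^2 * (∫ p in Set.Ioi (1:ℝ), p ^ (-2:ℝ)) := by
    have h := mul_le_mul_of_nonneg_left hF1.2 (sq_nonneg r)
    have heq : r^2 * ((∫ p in Set.Ioc (0:ℝ) 1, (deriv ψ p)^2)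
        + (4 * D₁^2 / r^2) * ∫ p in Set.Ioi (1:ℝ), p ^ (-2:ℝ))
        = r^2 * (∫ p in Set.Ioc (0:ℝ) 1, (deriv ψ p)^2)
          + 4 * D₁^2 * ∫ p in Set.Ioi (1:ℝ), p ^ (-2:ℝ) := by
      field_simp
    rw [heq] at h
    have hr9 : r^2 ≤ 9 := by nlinarith
    nlinarith [mul_le_mul_of_nonneg_right hr9 hI1]
  have hb2 : r * (∫ p in Set.Ioi (0:ℝ), |deriv (deriv ψ) p| * f p)
      ≤ 3 * (∫ p in Set.Ioc (0:ℝ) 1, |deriv (deriv ψ) p|)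
        + D₂ * (∫ p in Set.Ioi (1:ℝ), p ^ (-2:ℝ)) := by
    have h := mul_le_mul_of_nonneg_left hF2.2 hr.le
    have heq : r * ((∫ p in Set.Ioc (0:ℝ) 1, |deriv (deriv ψ) p|)
        + (D₂ / r) * ∫ p in Set.Ioi (1:ℝ), p ^ (-2:ℝ))
        = r * (∫ p in Set.Ioc (0:ℝ) 1, |deriv (deriv ψ) p|)
          + D₂ * ∫ p in Set.Ioi (1:ℝ), p ^ (-2:ℝ) := by
      field_simp
    rw [heq] at h
    nlinarith [mul_le_mul_of_nonneg_right hr3 hI2]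
  calc |∫ p in Set.Ioi (0:ℝ), Real.cos (p * x) *
      ((r^2 * (deriv ψ p)^2 - r * deriv (deriv ψ) p) * f p)|
      ≤ ∫ p in Set.Ioi (0:ℝ),
          (r^2 * ((deriv ψ p)^2 * f p) + r * (|deriv (deriv ψ) p| * f p)) := habs
    _ = r^2 * (∫ p in Set.Ioi (0:ℝ), (deriv ψ p)^2 * f p)
        + r * (∫ p in Set.Ioi (0:ℝ), |deriv (deriv ψ) p| * f p) := hsplit
    _ ≤ _ := by linarith

lemma rpow_self_le_abs_rpow (y b : ℝ) : y ^ b ≤ |y| ^ b := by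
  rcases le_or_gt 0 y with h | h
  · rw [abs_of_nonneg h]
  · rw [abs_of_neg h, Real.rpow_def_of_neg h]
    have h2 : (-y) ^ b = Real.exp (Real.log (-y) * b) := by
      rw [Real.rpow_def_of_pos (by linarith)]
    rw [h2, Real.log_neg_eq_log]
    nlinarith [Real.exp_pos (Real.log y * b), Real.cos_le_one (b * Real.pi),
      (Real.exp_pos (Real.log y * b)).le]

theorem stmt_19
    (β : ℝ) (hβ1 : 1 < β) (hβ2 : β ≤ 2)
    (ψ : ℝ → ℝ)
    (hmeas : Measurable ψ)
    (heven : ∀ p : ℝ, ψ (-p) = ψ p)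
    (hnonneg : ∀ p : ℝ, 0 ≤ ψ p)
    (hpos : ∀ p : ℝ, p ≠ 0 → 0 < ψ p)
    (hRV : ∀ l : ℝ, 0 < l →
      Filter.Tendsto (fun x => ψ (l * x) / ψ x) Filter.atTop (nhds (l ^ β)))
    (hdiff1 : ∀ p : ℝ, 0 < p → DifferentiableAt ℝ ψ p)
    (hdiff2 : ∀ p : ℝ, 0 < p → DifferentiableAt ℝ (deriv ψ) p)
    (D₁ D₂ : ℝ)
    (hD1 : ∀ l : ℝ, 1 ≤ l → l * |deriv ψ l| ≤ D₁ * ψ l)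
    (hD2 : ∀ l : ℝ, 1 ≤ l → l ^ 2 * |deriv (deriv ψ) l| ≤ D₂ * ψ l)
    (hint1 : MeasureTheory.IntegrableOn (fun l : ℝ => (deriv ψ l) ^ 2) (Set.Ioc (0:ℝ) 1))
    (hint2 : MeasureTheory.IntegrableOn (fun l : ℝ => |deriv (deriv ψ) l|) (Set.Ioc (0:ℝ) 1))
    (hint3 : MeasureTheory.IntegrableOn (fun l : ℝ => ψ l / l) (Set.Ioc (0:ℝ) 1))
    (C₀ : ℝ) (hC0 : ∀ p : ℝ, ψ p ≤ C₀ * p ^ 2)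
    (hliminf : 0 < Filter.liminf (fun p : ℝ => ψ p / p ^ 2) (nhdsWithin (0:ℝ) ({0}ᶜ))) :
    ∀ b : ℝ, 1 < b → b < β → ∃ C : ℝ, ∀ x : ℝ,
      (∫ r in (0:ℝ)..3, pdens ψ r x ^ b) ≤ C / (1 + x ^ 2) := by
  intro b hb hbβ
  have hπ : (0:ℝ) < Real.pi := Real.pi_pos
  have hψ1 : 0 < ψ 1 := hpos 1 one_ne_zero
  have hb0 : (0:ℝ) < b := by linarith
  set b' : ℝ := (b + β)/2 with hb'def
  have hb'b : b < b' := by rw [hb'def]; linarith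
  have hb'β : b' < β := by rw [hb'def]; linarith
  have hb'0 : (0:ℝ) < b' := by linarith
  set k : ℝ := (1/b' + 1/b)/2 with hkdef
  have hk0 : (0:ℝ) < k := by rw [hkdef]; positivity
  have hinv : 1/b' < 1/b := one_div_lt_one_div_of_lt hb0 hb'b
  have hk_lt : k < 1/b := by rw [hkdef]; linarith
  have hk_gt : 1/b' < k := by rw [hkdef]; linarith
  have hkb : k * b < 1 := by
    have := (lt_div_iff₀ hb0).1 hk_lt
    linarith
  have hkb' : 1 < k * b' := by
    have := (div_lt_iff₀ hb'0).1 hk_gt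
    linarith
  have hkb1 : k * (b - 1) < 1 := by nlinarith
  have hkb1' : 0 < k * (b - 1) ∨ True := Or.inr trivial
  obtain ⟨M, c, hM, hc, hlb⟩ := tail_lb β ψ hpos hRV hdiff1 D₁ hD1 b' hb'0 hb'β
  have hM0 : (0:ℝ) < M := lt_of_lt_of_le one_pos hM
  have hd0 := deriv_psi_tendsto ψ hnonneg hdiff1 hdiff2 hint1 hint2 C₀ hC0
  set J1 : ℝ := ∫ p in Set.Ioi M, p ^ (-(k*b')) with hJ1def
  set J2 : ℝ := ∫ p in Set.Ioi (1:ℝ), p ^ (-2:ℝ) with hJ2def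
  set I1 : ℝ := ∫ p in Set.Ioc (0:ℝ) 1, (deriv ψ p)^2 with hI1def
  set I2 : ℝ := ∫ p in Set.Ioc (0:ℝ) 1, |deriv (deriv ψ) p| with hI2def
  set B : ℝ := M * 3^k + ((k / Real.exp 1)^k * c^(-k)) * J1 with hBdef
  set K : ℝ := 9*I1 + 4*D₁^2*J2 + 3*I2 + D₂*J2 with hKdef
  have hJ1_0 : 0 ≤ J1 := by
    apply MeasureTheory.setIntegral_nonneg measurableSet_Ioi
    intro p hp
    exact Real.rpow_nonneg (le_of_lt (lt_trans hM0 hp)) _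
  have hJ2_0 : 0 ≤ J2 := by
    apply MeasureTheory.setIntegral_nonneg measurableSet_Ioi
    intro p hp
    exact Real.rpow_nonneg (le_of_lt (lt_trans one_pos hp)) _
  have hI1_0 : 0 ≤ I1 := MeasureTheory.integral_nonneg fun p => sq_nonneg _
  have hI2_0 : 0 ≤ I2 := MeasureTheory.integral_nonneg fun p => abs_nonneg _
  have hD₂0 : 0 ≤ D₂ := by
    have := hD2 1 le_rfl
    nlinarith [abs_nonneg (deriv (deriv ψ) 1), hψ1]
  have hB0 : 0 < B := by
    have h1 : (0:ℝ) < M * 3^k := by positivity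
    have h2 : (0:ℝ) ≤ ((k / Real.exp 1)^k * c^(-k)) * J1 := by positivity
    rw [hBdef]
    linarith
  have hK0 : 0 ≤ K := by
    have : (0:ℝ) ≤ 4*D₁^2*J2 := by positivity
    have : (0:ℝ) ≤ D₂*J2 := by positivity
    rw [hKdef]
    positivity
  -- rewrite integrand
  have hrw : ∀ r : ℝ, ∀ x : ℝ, pdens ψ r x =
      (1/Real.pi) * ∫ p in Set.Ioi (0:ℝ), Real.cos (p * x) * Real.exp (-(r * ψ p)) := by
    intro r x
    rw [pdens]
    congr 1
    apply MeasureTheory.integral_congr_ae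
    refine Filter.Eventually.of_forall fun p => ?_
    simp only [neg_mul]
  -- pointwise bound A
  have key1 : ∀ x r : ℝ, 0 < r → r ≤ 3 → |pdens ψ r x| ≤ (1/Real.pi) * (B * r^(-k)) := by
    intro x r hr hr3
    rw [hrw r x, abs_mul, abs_of_pos (by positivity : (0:ℝ) < 1/Real.pi)]
    apply mul_le_mul_of_nonneg_left _ (by positivity : (0:ℝ) ≤ 1/Real.pi)
    exact Abound ψ hmeas hnonneg hM hc hk0 hkb' hr hr3 hlb
  -- pointwise bound B
  have key2 : ∀ x r : ℝ, x ≠ 0 → 0 < r → r ≤ 3 →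
      |pdens ψ r x| ≤ (1/Real.pi) * (K / x^2) := by
    intro x r hx hr hr3
    have hx2 : (0:ℝ) < x^2 := by positivity
    rw [hrw r x, abs_mul, abs_of_pos (by positivity : (0:ℝ) < 1/Real.pi)]
    apply mul_le_mul_of_nonneg_left _ (by positivity : (0:ℝ) ≤ 1/Real.pi)
    rw [ibp_identity ψ hmeas hnonneg hψ1 hdiff1 hdiff2 hd0 hD1 hD2 hint1 hint2
      hM hc hk0 hkb' hr hlb hx]
    rw [abs_mul, abs_neg, abs_of_pos (by positivity : (0:ℝ) < 1/x^2)]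
    have hQ := Qbound ψ hmeas hnonneg hψ1 hD1 hD2 hint1 hint2 hr hr3 (x := x)
    calc (1/x^2) * |∫ p in Set.Ioi (0:ℝ), Real.cos (p * x) *
        ((r^2 * (deriv ψ p)^2 - r * deriv (deriv ψ) p) * Real.exp (-(r * ψ p)))|
        ≤ (1/x^2) * K := by
          apply mul_le_mul_of_nonneg_left _ (by positivity : (0:ℝ) ≤ 1/x^2)
          rw [hKdef]
          exact hQ.trans_eq (by ring)
      _ = K / x^2 := by ring
  -- master pointwise bound
  set Φ : ℝ → ℝ := fun r => (1/Real.pi)^b * B^b * r^(-(k*b))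
      + (1/Real.pi)^b * B^(b-1) * K * r^(-(k*(b-1))) with hΦdef
  have master : ∀ x r : ℝ, 0 < r → r ≤ 3 → (1 + x^2) * pdens ψ r x ^ b ≤ Φ r := by
    intro x r hr hr3
    set u : ℝ := |pdens ψ r x| with hudef
    have hu0 : 0 ≤ u := abs_nonneg _
    have hrk : (0:ℝ) < r^(-k) := Real.rpow_pos_of_pos hr _
    have ha0 : (0:ℝ) ≤ (1/Real.pi) * (B * r^(-k)) := by positivity
    have h1 : pdens ψ r x ^ b ≤ u ^ b := rpow_self_le_abs_rpow _ _
    have hA : u ≤ (1/Real.pi) * (B * r^(-k)) := key1 x r hr hr3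
    have t1 : u ^ b ≤ (1/Real.pi)^b * B^b * r^(-(k*b)) := by
      calc u ^ b ≤ ((1/Real.pi) * (B * r^(-k))) ^ b := Real.rpow_le_rpow hu0 hA hb0.le
        _ = (1/Real.pi)^b * B^b * r^(-(k*b)) := by
            rw [Real.mul_rpow (by positivity) (by positivity),
              Real.mul_rpow hB0.le hrk.le,
              show -(k*b) = (-k)*b by ring, Real.rpow_mul hr.le]
            ring
    have t2 : x^2 * u ^ b ≤ (1/Real.pi)^b * B^(b-1) * K * r^(-(k*(b-1))) := by
      have hRHS0 : 0 ≤ (1/Real.pi)^b * B^(b-1) * K * r^(-(k*(b-1))) := by positivity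
      rcases eq_or_lt_of_le hu0 with hu | hu
      · rw [← hu, Real.zero_rpow (by linarith : b ≠ 0), mul_zero]
        exact hRHS0
      · rcases eq_or_ne x 0 with hx | hx
        · rw [hx]
          simpa using hRHS0
        · have hx2 : (0:ℝ) < x^2 := by positivity
          have hsplit : u ^ b = u^(b-1) * u := by
            have h := Real.rpow_add hu (b-1) 1
            rw [Real.rpow_one, sub_add_cancel] at h
            exact h
          have t21 : u^(b-1) ≤ ((1/Real.pi) * (B * r^(-k)))^(b-1) :=
            Real.rpow_le_rpow hu0 hA (by linarith)
          have t22 : u ≤ (1/Real.pi) * (K / x^2) := key2 x r hx hr hr3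
          have expand : ((1/Real.pi) * (B * r^(-k)))^(b-1)
              = (1/Real.pi)^(b-1) * B^(b-1) * r^(-(k*(b-1))) := by
            rw [Real.mul_rpow (by positivity) (by positivity),
              Real.mul_rpow hB0.le hrk.le,
              show -(k*(b-1)) = (-k)*(b-1) by ring, Real.rpow_mul hr.le]
            ring
          have hπpow : (1/Real.pi)^(b-1) * (1/Real.pi) = (1/Real.pi)^b := by
            have h := Real.rpow_add (by positivity : (0:ℝ) < 1/Real.pi) (b-1) 1
            rw [Real.rpow_one, sub_add_cancel] at h
            exact h.symm
          calc x^2 * u^b = x^2 * (u^(b-1) * u) := by rw [hsplit]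
            _ ≤ x^2 * (((1/Real.pi) * (B * r^(-k)))^(b-1) * ((1/Real.pi) * (K / x^2))) := by
                apply mul_le_mul_of_nonneg_left _ hx2.le
                exact mul_le_mul t21 t22 hu0 (by positivity)
            _ = ((1/Real.pi) * (B * r^(-k)))^(b-1) * (1/Real.pi) * K := by
                field_simp
            _ = (1/Real.pi)^b * B^(b-1) * K * r^(-(k*(b-1))) := by
                rw [expand]
                rw [← hπpow]
                ring
    have hx2b : x^2 * pdens ψ r x ^ b ≤ x^2 * u^b :=
      mul_le_mul_of_nonneg_left h1 (by positivity)
    calc (1 + x^2) * pdens ψ r x ^ b = pdens ψ r x ^ b + x^2 * pdens ψ r x ^ b := by ring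
      _ ≤ u^b + x^2 * u^b := add_le_add h1 hx2b
      _ ≤ (1/Real.pi)^b * B^b * r^(-(k*b))
          + (1/Real.pi)^b * B^(b-1) * K * r^(-(k*(b-1))) := add_le_add t1 t2
      _ = Φ r := by rw [hΦdef]
  -- Φ is interval integrable and nonnegative
  have hΦint : IntervalIntegrable Φ MeasureTheory.volume 0 3 := by
    apply IntervalIntegrable.add
    · exact (intervalIntegral.intervalIntegrable_rpow' (by linarith : (-1:ℝ) < -(k*b))).const_mul _
    · apply IntervalIntegrable.const_mul
      apply intervalIntegral.intervalIntegrable_rpow'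
      nlinarith
  have hΦ0 : ∀ r : ℝ, 0 ≤ r → 0 ≤ Φ r := by
    intro r hr0
    rw [hΦdef]
    have h1 : (0:ℝ) ≤ B^(b-1) := Real.rpow_nonneg hB0.le _
    have h2 : (0:ℝ) ≤ r^(-(k*b)) := Real.rpow_nonneg hr0 _
    have h3 : (0:ℝ) ≤ r^(-(k*(b-1))) := Real.rpow_nonneg hr0 _
    have h4 : (0:ℝ) ≤ (1/Real.pi)^b := Real.rpow_nonneg (by positivity) _
    have h5 : (0:ℝ) ≤ B^b := Real.rpow_nonneg hB0.le _
    positivity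
  refine ⟨∫ r in (0:ℝ)..3, Φ r, ?_⟩
  intro x
  have hx2 : (0:ℝ) < 1 + x^2 := by positivity
  have hC0' : 0 ≤ ∫ r in (0:ℝ)..3, Φ r :=
    intervalIntegral.integral_nonneg (by norm_num) (fun r hr => hΦ0 r hr.1)
  by_cases hInt : IntervalIntegrable (fun r => pdens ψ r x ^ b) MeasureTheory.volume 0 3
  · have hae : (fun r => pdens ψ r x ^ b)
        ≤ᵐ[MeasureTheory.volume.restrict (Set.Icc (0:ℝ) 3)] fun r => Φ r / (1 + x^2) := by
      have h0 : ∀ᵐ r ∂(MeasureTheory.volume.restrict (Set.Icc (0:ℝ) 3)), r ≠ (0:ℝ) := by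
        apply MeasureTheory.ae_restrict_of_ae
        rw [MeasureTheory.ae_iff]
        simp only [ne_eq, not_not]
        rw [show {a : ℝ | a = 0} = {(0:ℝ)} by ext a; simp]
        exact MeasureTheory.measure_singleton 0
      filter_upwards [h0, MeasureTheory.ae_restrict_mem measurableSet_Icc] with r hr0 hrmem
      have hr : 0 < r := lt_of_le_of_ne hrmem.1 (Ne.symm hr0)
      rw [le_div_iff₀ hx2]
      calc pdens ψ r x ^ b * (1 + x^2) = (1 + x^2) * pdens ψ r x ^ b := by ring
        _ ≤ Φ r := master x r hr hrmem.2
    calc (∫ r in (0:ℝ)..3, pdens ψ r x ^ b)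
        ≤ ∫ r in (0:ℝ)..3, Φ r / (1 + x^2) :=
          intervalIntegral.integral_mono_ae_restrict (by norm_num) hInt
            (hΦint.div_const _) hae
      _ = (∫ r in (0:ℝ)..3, Φ r) / (1 + x^2) := by
          rw [intervalIntegral.integral_div]
  · rw [intervalIntegral.integral_undef hInt]
    positivity
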